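/- Let S be a finite nonempty set, q : S → ℝ with q s ≥ 0, μ : S → ℝ with μ s > 0, L a real number, and a a natural number with a ≥ 2. Let O ⊆ S be nonempty and define Λ₀ = ( 2·∑_{s∈O} (μ s·L − q s) − |O| − 2(a−1) ) / ( ∑_{s∈O} μ s ). Define P : S → ℝ by P s = ( 2·(μ s·L − q s) − 1 − μ s·Λ₀ ) / ( 2(a−1) ) for s ∈ O and P s = 0 for s ∉ O. If P s ≥ 0 for all s ∈ O, and (2·q s + 1)/(μ s) ≥ 2L − Λ₀ for all s ∉ O, then ∑_{s∈S} P s = 1 (so P ∈ Δ) and f(P) ≤ f(Q) for every Q ∈ Δ; that is, P is a minimizer of f over the probability simplex. -/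

import Mathlib

open Finset

/-- The SCD objective function
`f(P) = (a-1) ∑ s (P s)²/μ s + ∑ s ((2(q s - μ s L)+1)/μ s) · P s`. -/
noncomputable def scdObjective {S : Type*} [Fintype S]
    (q μ : S → ℝ) (L : ℝ) (a : ℕ) (P : S → ℝ) : ℝ :=
  ((a : ℝ) - 1) * ∑ s, (P s) ^ 2 / μ s
    + ∑ s, ((2 * (q s - μ s * L) + 1) / μ s) * P s

/-- **KKT sufficiency of the candidate test in the SCD algorithm.**
Given a nonempty candidate set `O ⊆ S`, define
`Λ₀ = (2 ∑_{s∈O} (μ s L − q s) − |O| − 2(a−1)) / (∑_{s∈O} μ s)` and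
`P s = (2(μ s L − q s) − 1 − μ s Λ₀)/(2(a−1))` on `O`, and `P s = 0` off `O`.
If `P` is nonnegative on `O` and `(2 q s + 1)/μ s ≥ 2L − Λ₀` off `O`, then `P` lies in
the probability simplex and minimizes `f` over it. -/
theorem scd_kkt_sufficiency {S : Type*} [Fintype S] [Nonempty S]
    (q μ : S → ℝ) (hq : ∀ s, 0 ≤ q s) (hμ : ∀ s, 0 < μ s)
    (L : ℝ) (a : ℕ) (ha : 2 ≤ a)
    (O : Finset S) (hO : O.Nonempty)
    (Λ₀ : ℝ)
    (hΛ₀ : Λ₀ = (2 * ∑ s ∈ O, (μ s * L - q s) - (O.card : ℝ)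
                  - 2 * ((a : ℝ) - 1)) / ∑ s ∈ O, μ s)
    (P : S → ℝ)
    (hPin : ∀ s ∈ O,
      P s = (2 * (μ s * L - q s) - 1 - μ s * Λ₀) / (2 * ((a : ℝ) - 1)))
    (hPout : ∀ s ∉ O, P s = 0)
    (hPnonneg : ∀ s ∈ O, 0 ≤ P s)
    (htest : ∀ s ∉ O, 2 * L - Λ₀ ≤ (2 * q s + 1) / μ s) :
    (∑ s, P s = 1) ∧
    (∀ Q : S → ℝ, ((∀ s, 0 ≤ Q s) ∧ ∑ s, Q s = 1) →
      scdObjective q μ L a P ≤ scdObjective q μ L a Q) := by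
  have ha2 : (2:ℝ) ≤ (a:ℝ) := by exact_mod_cast ha
  have ha0 : (0:ℝ) < (a:ℝ) - 1 := by linarith
  have ha0' : (2 * ((a:ℝ) - 1)) ≠ 0 := by positivity
  have hμO : 0 < ∑ s ∈ O, μ s := Finset.sum_pos (fun s _ => hμ s) hO
  have hΛμ : Λ₀ * ∑ s ∈ O, μ s
      = 2 * ∑ s ∈ O, (μ s * L - q s) - (O.card : ℝ) - 2 * ((a : ℝ) - 1) := by
    rw [hΛ₀]
    rw [div_mul_cancel₀ _ hμO.ne']
  have hsum : ∑ s, P s = 1 := by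
    rw [← Finset.sum_subset (Finset.subset_univ O) (fun s _ hs => hPout s hs)]
    rw [Finset.sum_congr rfl hPin, ← Finset.sum_div]
    rw [div_eq_one_iff_eq ha0']
    have h1 : ∑ s ∈ O, (2 * (μ s * L - q s) - 1 - μ s * Λ₀)
        = ∑ s ∈ O, (2 * (μ s * L - q s)) - ∑ s ∈ O, (1:ℝ) - ∑ s ∈ O, (μ s * Λ₀) := by
      rw [Finset.sum_sub_distrib, Finset.sum_sub_distrib]
    have h2 : ∑ s ∈ O, (2 * (μ s * L - q s)) = 2 * ∑ s ∈ O, (μ s * L - q s) :=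
      (Finset.mul_sum _ _ _).symm
    have h3 : ∑ s ∈ O, (1:ℝ) = (O.card : ℝ) := by simp
    have h4 : ∑ s ∈ O, (μ s * Λ₀) = (∑ s ∈ O, μ s) * Λ₀ := (Finset.sum_mul _ _ _).symm
    rw [h1, h2, h3, h4]
    linarith [hΛμ]
  refine ⟨hsum, ?_⟩
  rintro Q ⟨hQ0, hQ1⟩
  -- pointwise inequality
  have hpt : ∀ s, ((a:ℝ)-1) * (P s)^2 / μ s + ((2 * (q s - μ s * L) + 1) / μ s) * P s
      ≤ ((a:ℝ)-1) * (Q s)^2 / μ s + ((2 * (q s - μ s * L) + 1) / μ s) * Q s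
        + Λ₀ * (Q s - P s) := by
    intro s
    have hμs := hμ s
    have hμne : μ s ≠ 0 := ne_of_gt hμs
    have e : ∀ x y : ℝ, ((a:ℝ)-1) * x^2 / μ s + ((2 * (q s - μ s * L) + 1) / μ s) * x + y
        = (((a:ℝ)-1) * x^2 + (2 * (q s - μ s * L) + 1) * x + μ s * y) / μ s := by
      intro x y; field_simp
    have eL := e (P s) 0
    have eR := e (Q s) (Λ₀ * (Q s - P s))
    rw [add_zero] at eL
    rw [show ((a:ℝ)-1) * (Q s)^2 / μ s + ((2 * (q s - μ s * L) + 1) / μ s) * Q s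
        + Λ₀ * (Q s - P s) = (((a:ℝ)-1) * (Q s)^2 + (2 * (q s - μ s * L) + 1) * Q s
        + μ s * (Λ₀ * (Q s - P s))) / μ s from eR, eL]
    rw [div_le_div_iff_of_pos_right hμs]
    by_cases hs : s ∈ O
    · have hP := hPin s hs
      have key : 2 * ((a:ℝ)-1) * P s = 2 * (μ s * L - q s) - 1 - μ s * Λ₀ := by
        rw [hP]; field_simp
      have key2 : 2 * ((a:ℝ)-1) * P s * (Q s - P s)
          = (2 * (μ s * L - q s) - 1 - μ s * Λ₀) * (Q s - P s) := by rw [key]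
      nlinarith [mul_nonneg ha0.le (sq_nonneg (Q s - P s)), key2]
    · have hP := hPout s hs
      have ht := htest s hs
      have ht' : (2 * L - Λ₀) * μ s ≤ 2 * q s + 1 := (le_div_iff₀ hμs).mp ht
      have hQs := hQ0 s
      rw [hP]
      nlinarith [sq_nonneg (Q s), mul_nonneg (mul_nonneg hμs.le hQs) hQs]
  -- sum up
  have expand : ∀ R : S → ℝ, scdObjective q μ L a R
      = ∑ s, (((a:ℝ)-1) * (R s)^2 / μ s + ((2 * (q s - μ s * L) + 1) / μ s) * R s) := by
    intro R
    rw [scdObjective, Finset.mul_sum, ← Finset.sum_add_distrib]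
    exact Finset.sum_congr rfl (fun s _ => by rw [mul_div_assoc])
  rw [expand P, expand Q]
  calc ∑ s, (((a:ℝ)-1) * (P s)^2 / μ s + ((2 * (q s - μ s * L) + 1) / μ s) * P s)
      ≤ ∑ s, (((a:ℝ)-1) * (Q s)^2 / μ s + ((2 * (q s - μ s * L) + 1) / μ s) * Q s
        + Λ₀ * (Q s - P s)) := Finset.sum_le_sum (fun s _ => hpt s)
    _ = ∑ s, (((a:ℝ)-1) * (Q s)^2 / μ s + ((2 * (q s - μ s * L) + 1) / μ s) * Q s)
        + Λ₀ * ((∑ s, Q s) - ∑ s, P s) := by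
        rw [Finset.sum_add_distrib, ← Finset.mul_sum, Finset.sum_sub_distrib]
    _ = _ := by rw [hQ1, hsum]; ring
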